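/- Suppose f : ℤ^d → ℝ satisfies |f(x)| ≤ c·(1 ∨ |x|)^{−(d−2)} e^{−c'ν|x|} with c, c', ν > 0 and d > 2, and suppose f also satisfies the same bound with |x| replaced by Euclidean distance. Then for any r ≥ 3 and x ∈ [−r/2, r/2)^d ∩ ℤ^d, the wrapped sum satisfies ∑_{u∈ℤ^d, u≠0} |f(x + ru)| ≤ C·r^{−d}·ν^{−2} for a constant C depending only on d, c, c'. -/

import Mathlib

/-- The sup norm of `x : ℤ^d`, as a real number. -/
noncomputable def supNorm {d : ℕ} (x : Fin d → ℤ) : ℝ :=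
  ((Finset.univ.sup fun j => (x j).natAbs : ℕ) : ℝ)

/-- The Euclidean norm of `x : ℤ^d`, as a real number. -/
noncomputable def eucNorm {d : ℕ} (x : Fin d → ℤ) : ℝ :=
  Real.sqrt (∑ j, ((x j : ℝ)) ^ 2)

open Finset

lemma geom_piece (β : ℝ) (hβ : 0 < β) (s : Finset ℕ) :
    ∑ n ∈ s, (n : ℝ) * Real.exp (-β * n) ≤ 4 / β ^ 2 := by
  set q : ℝ := Real.exp (-β) with hq
  have hq0 : 0 < q := Real.exp_pos _
  have hq1 : q < 1 := Real.exp_lt_one_iff.mpr (by linarith)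
  have hnorm : ‖q‖ < 1 := by rw [Real.norm_eq_abs, abs_of_pos hq0]; exact hq1
  have hsum := hasSum_coe_mul_geometric_of_norm_lt_one (𝕜 := ℝ) hnorm
  have heq : ∀ n : ℕ, (n : ℝ) * Real.exp (-β * n) = (n : ℝ) * q ^ n := by
    intro n
    rw [hq, ← Real.exp_nat_mul]
    ring_nf
  have hle : ∑ n ∈ s, (n : ℝ) * Real.exp (-β * n) ≤ q / (1 - q) ^ 2 := by
    calc ∑ n ∈ s, (n : ℝ) * Real.exp (-β * n) = ∑ n ∈ s, (n : ℝ) * q ^ n := by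
          exact Finset.sum_congr rfl fun n _ => heq n
      _ ≤ q / (1 - q) ^ 2 := sum_le_hasSum s (fun n _ => by positivity) hsum
  refine hle.trans ?_
  -- q ≤ 1/(1+β), so 1 - q ≥ β/(1+β)
  have h1 : q ≤ 1 / (1 + β) := by
    rw [hq]
    rw [Real.exp_neg]
    rw [one_div]
    apply inv_anti₀ (by linarith)
    linarith [Real.add_one_le_exp β]
  have h2 : β / (1 + β) ≤ 1 - q := by
    have hb1 : (0:ℝ) < 1 + β := by linarith
    rw [le_div_iff₀ hb1] at h1
    rw [div_le_iff₀ hb1]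
    nlinarith
  have h3 : q * (1 + β) ^ 2 ≤ 4 := by
    have e1 : 1 + β ≤ 2 * Real.exp (β / 2) := by
      have := Real.add_one_le_exp (β / 2)
      nlinarith [Real.exp_pos (β/2)]
    have e2 : (1 + β) ^ 2 ≤ 4 * Real.exp β := by
      have h := mul_le_mul e1 e1 (by linarith [Real.exp_pos (β/2)]) (by positivity)
      calc (1+β)^2 = (1+β)*(1+β) := by ring
        _ ≤ (2 * Real.exp (β/2)) * (2 * Real.exp (β/2)) := h
        _ = 4 * (Real.exp (β/2) * Real.exp (β/2)) := by ring
        _ = 4 * Real.exp β := by rw [← Real.exp_add]; norm_num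
    calc q * (1 + β)^2 ≤ q * (4 * Real.exp β) := by nlinarith
      _ = 4 * (Real.exp (-β) * Real.exp β) := by rw [hq]; ring
      _ = 4 := by rw [← Real.exp_add]; norm_num
  have h1q : 0 < 1 - q := by linarith
  rw [div_le_div_iff₀ (by positivity) (by positivity)]
  have h2sq : (β / (1+β))^2 ≤ (1-q)^2 := by
    apply pow_le_pow_left₀ (by positivity) h2
  have hb1 : (0:ℝ) < 1 + β := by linarith
  have : β^2 / (1+β)^2 ≤ (1-q)^2 := by
    rw [div_pow] at h2sq; exact h2sq
  rw [div_le_iff₀ (by positivity)] at this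
  nlinarith [sq_nonneg (1+β), sq_nonneg (1-q)]

/-- sup norm as a natural number -/
def znsup {d : ℕ} (u : Fin d → ℤ) : ℕ := Finset.univ.sup fun j => (u j).natAbs

/-- the box of radius m -/
noncomputable def zbox (d m : ℕ) : Finset (Fin d → ℤ) :=
  Fintype.piFinset fun _ : Fin d => Finset.Icc (-(m : ℤ)) m

lemma card_zbox (d m : ℕ) : (zbox d m).card = (2 * m + 1) ^ d := by
  rw [zbox, Fintype.card_piFinset]
  simp [Int.card_Icc]
  congr 1
  omega

lemma mem_zbox {d m : ℕ} {u : Fin d → ℤ} : u ∈ zbox d m ↔ znsup u ≤ m := by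
  rw [zbox, Fintype.mem_piFinset, znsup]
  constructor
  · intro h
    apply Finset.sup_le
    intro j _
    have := h j
    rw [Finset.mem_Icc] at this
    omega
  · intro h j
    have h1 : (u j).natAbs ≤ Finset.univ.sup fun j => (u j).natAbs := by
      exact Finset.le_sup (f := fun j => (u j).natAbs) (Finset.mem_univ j)
    rw [Finset.mem_Icc]
    rcases Int.natAbs_eq (u j) with h2 | h2 <;> omega

lemma zbox_mono {d m m' : ℕ} (h : m ≤ m') : zbox d m ⊆ zbox d m' := by
  intro u hu
  rw [mem_zbox] at *
  omega

lemma znsup_pos {d : ℕ} {u : Fin d → ℤ} (hu : u ≠ 0) : 1 ≤ znsup u := by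
  obtain ⟨j, hj⟩ := Function.ne_iff.mp hu
  have : 1 ≤ (u j).natAbs := by
    have : u j ≠ 0 := hj
    omega
  rw [znsup]
  exact le_trans this (Finset.le_sup (f := fun j => (u j).natAbs) (Finset.mem_univ j))

lemma shell_card_le (d : ℕ) (hd : 0 < d) (s : Finset (Fin d → ℤ)) (n : ℕ) (hn : 1 ≤ n)
    (hs : ∀ u ∈ s, znsup u = n) : (s.card : ℝ) ≤ 2 * d * (3 * n) ^ (d - 1) := by
  have hsub : s ⊆ zbox d n \ zbox d (n - 1) := by
    intro u hu
    rw [Finset.mem_sdiff, mem_zbox, mem_zbox]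
    have := hs u hu
    omega
  have hcard : s.card ≤ (2 * n + 1) ^ d - (2 * (n - 1) + 1) ^ d := by
    calc s.card ≤ (zbox d n \ zbox d (n - 1)).card := Finset.card_le_card hsub
      _ = (zbox d n).card - (zbox d (n-1)).card :=
          Finset.card_sdiff_of_subset (zbox_mono (by omega))
      _ = (2 * n + 1) ^ d - (2 * (n - 1) + 1) ^ d := by rw [card_zbox, card_zbox]
  -- now in ℝ
  set a : ℝ := 2 * n + 1 with ha
  set b : ℝ := 2 * n - 1 with hb
  have hb0 : (0:ℝ) ≤ b := by
    have : (1:ℝ) ≤ n := by exact_mod_cast hn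
    rw [hb]; linarith
  have hba : b ≤ a := by rw [ha, hb]; linarith
  have hcast : ((2 * (n-1) + 1 : ℕ) : ℝ) = b := by
    have : 2 * (n - 1) + 1 = 2 * n - 1 := by omega
    rw [this, hb]
    have : 1 ≤ 2 * n := by omega
    push_cast [this]
    ring
  have hpow_le : ((2 * (n-1) + 1) ^ d : ℕ) ≤ (2 * n + 1) ^ d :=
    Nat.pow_le_pow_left (by omega) d
  have hcastcard : (s.card : ℝ) ≤ a ^ d - b ^ d := by
    calc (s.card : ℝ) ≤ (((2 * n + 1) ^ d - (2 * (n - 1) + 1) ^ d : ℕ) : ℝ) := by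
          exact_mod_cast hcard
      _ = a ^ d - b ^ d := by
          rw [Nat.cast_sub hpow_le, Nat.cast_pow, Nat.cast_pow, hcast]
          congr 1
          rw [ha]; push_cast; ring
  refine hcastcard.trans ?_
  -- a^d - b^d ≤ d * a^(d-1) * (a - b) = 2 d a^(d-1) ≤ 2 d (3n)^(d-1)
  have hgeom := geom_sum₂_mul a b d
  have hterm : ∀ i ∈ Finset.range d, a ^ i * b ^ (d - 1 - i) ≤ a ^ (d - 1) := by
    intro i hi
    rw [Finset.mem_range] at hi
    calc a ^ i * b ^ (d - 1 - i) ≤ a ^ i * a ^ (d - 1 - i) := by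
          apply mul_le_mul_of_nonneg_left (pow_le_pow_left₀ hb0 hba _) (by positivity)
      _ = a ^ (d - 1) := by rw [← pow_add]; congr 1; omega
  have hsumle : ∑ i ∈ Finset.range d, a ^ i * b ^ (d - 1 - i) ≤ d * a ^ (d - 1) := by
    calc ∑ i ∈ Finset.range d, a ^ i * b ^ (d - 1 - i)
        ≤ ∑ _i ∈ Finset.range d, a ^ (d - 1) := Finset.sum_le_sum hterm
      _ = d * a ^ (d - 1) := by rw [Finset.sum_const, Finset.card_range]; simp
  have hab : a - b = 2 := by rw [ha, hb]; ring
  have h1 : a ^ d - b ^ d ≤ d * a ^ (d - 1) * 2 := by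
    rw [← hgeom, hab]
    have : (0:ℝ) ≤ 2 := by norm_num
    nlinarith [hsumle]
  refine h1.trans ?_
  have han : a ≤ 3 * n := by
    rw [ha]
    have : (1:ℝ) ≤ n := by exact_mod_cast hn
    linarith
  have : a ^ (d-1) ≤ (3 * (n:ℝ)) ^ (d - 1) := pow_le_pow_left₀ (by rw [ha]; positivity) han _
  have hd0 : (0:ℝ) ≤ d := by positivity
  nlinarith [mul_le_mul_of_nonneg_left this hd0]

lemma master (d k : ℕ) (hd : d = k + 3) (A β : ℝ) (hA : 0 ≤ A) (hβ : 0 < β)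
    (F : (Fin d → ℤ) → ℝ) (hF0 : ∀ u, 0 ≤ F u)
    (hF : ∀ u : Fin d → ℤ, u ≠ 0 →
      F u ≤ A / (znsup u : ℝ) ^ (k + 1) * Real.exp (-β * znsup u))
    (s : Finset (Fin d → ℤ)) (h0 : (0 : Fin d → ℤ) ∉ s) :
    ∑ u ∈ s, F u ≤ A * (2 * d * 3 ^ (d - 1)) * (4 / β ^ 2) := by
  classical
  set N := s.sup znsup with hN
  set G : (Fin d → ℤ) → ℝ := fun u => A / (znsup u : ℝ) ^ (k + 1) * Real.exp (-β * znsup u)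
    with hG
  have hG0 : ∀ u, 0 ≤ G u := by
    intro u; rw [hG]; positivity
  set E : Finset (Fin d → ℤ) := (zbox d N).erase 0 with hE
  have hsub : s ⊆ E := by
    intro u hu
    rw [hE, Finset.mem_erase]
    exact ⟨fun h => h0 (h ▸ hu), mem_zbox.mpr (Finset.le_sup hu)⟩
  have step1 : ∑ u ∈ s, F u ≤ ∑ u ∈ E, G u := by
    calc ∑ u ∈ s, F u ≤ ∑ u ∈ s, G u :=
          Finset.sum_le_sum fun u hu => hF u (fun h => h0 (h ▸ hu))
      _ ≤ ∑ u ∈ E, G u := Finset.sum_le_sum_of_subset_of_nonneg hsub fun u _ _ => hG0 u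
  have hmaps : ∀ u ∈ E, znsup u ∈ Finset.Icc 1 N := by
    intro u hu
    rw [hE, Finset.mem_erase] at hu
    rw [Finset.mem_Icc]
    exact ⟨znsup_pos hu.1, mem_zbox.mp hu.2⟩
  have step2 : ∑ u ∈ E, G u
      = ∑ n ∈ Finset.Icc 1 N, ∑ u ∈ E.filter (fun u => znsup u = n), G u :=
    (Finset.sum_fiberwise_of_maps_to hmaps G).symm
  have hd1 : d - 1 = k + 2 := by omega
  have inner_le : ∀ n ∈ Finset.Icc 1 N,
      ∑ u ∈ E.filter (fun u => znsup u = n), G u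
        ≤ (2 * d * 3 ^ (d-1) * A) * ((n:ℝ) * Real.exp (-β * n)) := by
    intro n hn
    rw [Finset.mem_Icc] at hn
    have hn1 : 1 ≤ n := hn.1
    have hnR : (1:ℝ) ≤ (n:ℝ) := by exact_mod_cast hn1
    have hcongr : ∑ u ∈ E.filter (fun u => znsup u = n), G u
        = (E.filter (fun u => znsup u = n)).card
          * (A / (n : ℝ) ^ (k + 1) * Real.exp (-β * n)) := by
      rw [Finset.sum_congr rfl (fun u hu => ?_), Finset.sum_const, nsmul_eq_mul]
      simp only [hG, (Finset.mem_filter.mp hu).2]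
    rw [hcongr]
    have hcard := shell_card_le d (by omega) (E.filter (fun u => znsup u = n)) n hn1
      (fun u hu => (Finset.mem_filter.mp hu).2)
    have hterm0 : (0:ℝ) ≤ A / (n : ℝ) ^ (k + 1) * Real.exp (-β * n) := by positivity
    calc ((E.filter (fun u => znsup u = n)).card : ℝ)
          * (A / (n : ℝ) ^ (k + 1) * Real.exp (-β * n))
        ≤ (2 * d * (3 * n) ^ (d-1)) * (A / (n : ℝ) ^ (k + 1) * Real.exp (-β * n)) :=
          mul_le_mul_of_nonneg_right hcard hterm0
      _ = (2 * d * 3 ^ (d-1) * A) * ((n:ℝ) * Real.exp (-β * n)) := by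
          rw [hd1, mul_pow]
          have hn0 : (n:ℝ) ≠ 0 := by linarith
          field_simp
          ring
  have step3 : ∑ n ∈ Finset.Icc 1 N, ∑ u ∈ E.filter (fun u => znsup u = n), G u
      ≤ (2 * d * 3 ^ (d-1) * A) * (4 / β ^ 2) := by
    calc ∑ n ∈ Finset.Icc 1 N, ∑ u ∈ E.filter (fun u => znsup u = n), G u
        ≤ ∑ n ∈ Finset.Icc 1 N, (2 * d * 3 ^ (d-1) * A) * ((n:ℝ) * Real.exp (-β * n)) :=
          Finset.sum_le_sum inner_le
      _ = (2 * d * 3 ^ (d-1) * A) * ∑ n ∈ Finset.Icc 1 N, (n:ℝ) * Real.exp (-β * n) := by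
          rw [Finset.mul_sum]
      _ ≤ (2 * d * 3 ^ (d-1) * A) * (4 / β ^ 2) := by
          apply mul_le_mul_of_nonneg_left (geom_piece β hβ _) (by positivity)
  calc ∑ u ∈ s, F u ≤ ∑ u ∈ E, G u := step1
    _ = _ := step2
    _ ≤ (2 * d * 3 ^ (d-1) * A) * (4 / β ^ 2) := step3
    _ = A * (2 * d * 3 ^ (d - 1)) * (4 / β ^ 2) := by ring

lemma pointwise_bound (d : ℕ) (hd : 2 < d) (c c' ν : ℝ) (hc : 0 < c) (hc' : 0 < c')
    (hν : 0 < ν) (f : (Fin d → ℤ) → ℝ)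
    (hf : ∀ x, |f x| ≤ c / (max 1 (eucNorm x)) ^ (d - 2) * Real.exp (-c' * ν * eucNorm x))
    (r : ℕ) (hr : 3 ≤ r) (x : Fin d → ℤ) (hx : ∀ j, -(r : ℤ) ≤ 2 * x j ∧ 2 * x j < r)
    (u : Fin d → ℤ) (hu : u ≠ 0) :
    |f (x + (r : ℤ) • u)| ≤ (c * (2 / (r:ℝ)) ^ (d - 2)) / (znsup u : ℝ) ^ (d - 2)
      * Real.exp (-(c' * ν * r / 2) * znsup u) := by
  have hdpos : 0 < d := by omega
  have : Nonempty (Fin d) := ⟨⟨0, hdpos⟩⟩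
  set n : ℕ := znsup u with hn
  have hn1 : 1 ≤ n := by
    obtain ⟨j, hj⟩ := Function.ne_iff.mp hu
    have h1 : 1 ≤ (u j).natAbs := by
      have : u j ≠ 0 := hj
      omega
    refine le_trans h1 ?_
    exact Finset.le_sup (f := fun j => (u j).natAbs) (Finset.mem_univ j)
  have hnR : (1:ℝ) ≤ (n:ℝ) := by exact_mod_cast hn1
  have hrR : (3:ℝ) ≤ (r:ℝ) := by exact_mod_cast hr
  set v : Fin d → ℤ := x + (r : ℤ) • u with hv
  -- lower bound on eucNorm v
  obtain ⟨j, -, hjs⟩ := Finset.exists_mem_eq_sup Finset.univ Finset.univ_nonempty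
    (fun j => (u j).natAbs)
  have huj : |((u j : ℤ) : ℝ)| = (n : ℝ) := by
    have hne : n = (u j).natAbs := by rw [hn, znsup, hjs]
    rw [hne, Nat.cast_natAbs, Int.cast_abs]
  have hxj : |((x j : ℤ) : ℝ)| ≤ (r:ℝ) / 2 := by
    obtain ⟨h1, h2⟩ := hx j
    rw [abs_le]
    constructor
    · have : (-(r:ℝ)) ≤ 2 * (x j : ℝ) := by exact_mod_cast h1
      linarith
    · have : 2 * ((x j : ℤ) : ℝ) ≤ (r:ℝ) := by
        have : 2 * x j ≤ (r : ℤ) := le_of_lt h2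
        exact_mod_cast this
      linarith
  have hvj : ((v j : ℤ) : ℝ) = (x j : ℝ) + (r:ℝ) * (u j : ℝ) := by
    rw [hv]
    push_cast
    simp [Pi.add_apply]
  have hcoord : (r:ℝ) * n / 2 ≤ |((v j : ℤ) : ℝ)| := by
    have habs : |(r:ℝ) * (u j : ℝ)| - |((x j : ℤ) : ℝ)| ≤ |((v j : ℤ) : ℝ)| := by
      rw [hvj]
      have h := abs_sub_abs_le_abs_sub ((r:ℝ) * (u j : ℝ)) (-(x j : ℝ))
      simp only [abs_neg, sub_neg_eq_add] at h
      calc |(r:ℝ) * (u j : ℝ)| - |((x j : ℤ) : ℝ)|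
          ≤ |(r:ℝ) * (u j : ℝ) + (x j : ℝ)| := h
        _ = |(x j : ℝ) + (r:ℝ) * (u j : ℝ)| := by rw [add_comm]
    have : |(r:ℝ) * (u j : ℝ)| = (r:ℝ) * n := by
      rw [abs_mul, huj, abs_of_nonneg (by linarith : (0:ℝ) ≤ (r:ℝ))]
    nlinarith
  have hEcoord : |((v j : ℤ) : ℝ)| ≤ eucNorm v := by
    rw [eucNorm, ← Real.sqrt_sq_eq_abs]
    apply Real.sqrt_le_sqrt
    exact Finset.single_le_sum (f := fun i => ((v i : ℤ) : ℝ) ^ 2)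
      (fun i _ => sq_nonneg _) (Finset.mem_univ j)
  have hE : (r:ℝ) * n / 2 ≤ eucNorm v := le_trans hcoord hEcoord
  have hrn2 : (0:ℝ) < (r:ℝ) * n / 2 := by nlinarith
  have hmax : (r:ℝ) * n / 2 ≤ max 1 (eucNorm v) := le_trans hE (le_max_right _ _)
  have h1 := hf v
  have hfirst : c / (max 1 (eucNorm v)) ^ (d - 2) ≤ c / ((r:ℝ) * n / 2) ^ (d - 2) := by
    apply div_le_div_of_nonneg_left hc.le (by positivity)
    exact pow_le_pow_left₀ (le_of_lt hrn2) hmax _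
  have hsecond : Real.exp (-c' * ν * eucNorm v) ≤ Real.exp (-(c' * ν * r / 2) * n) := by
    rw [Real.exp_le_exp]
    have hcv : 0 < c' * ν := by positivity
    nlinarith
  have hchain : |f v| ≤ c / ((r:ℝ) * n / 2) ^ (d - 2) * Real.exp (-(c' * ν * r / 2) * n) := by
    calc |f v| ≤ c / (max 1 (eucNorm v)) ^ (d - 2) * Real.exp (-c' * ν * eucNorm v) := h1
      _ ≤ c / ((r:ℝ) * n / 2) ^ (d - 2) * Real.exp (-(c' * ν * r / 2) * n) := by
          apply mul_le_mul hfirst hsecond (le_of_lt (Real.exp_pos _))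
          positivity
  refine le_trans hchain (le_of_eq ?_)
  congr 1
  have hsplit : ((r:ℝ) * n / 2) ^ (d - 2) = ((r:ℝ) / 2) ^ (d - 2) * (n:ℝ) ^ (d - 2) := by
    rw [← mul_pow]
    congr 1
    ring
  rw [hsplit]
  have h2r : (2 / (r:ℝ)) ^ (d - 2) = (((r:ℝ) / 2) ^ (d - 2))⁻¹ := by
    rw [← inv_pow]
    congr 1
    rw [inv_div]
  rw [h2r]
  have hr2 : ((r:ℝ) / 2) ^ (d - 2) ≠ 0 := by positivity
  have hn2 : ((n:ℝ)) ^ (d - 2) ≠ 0 := by positivity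
  field_simp

/-- If `|f(x)| ≤ c (1 ∨ |x|)^{−(d−2)} e^{−c'ν|x|}` (Euclidean norm) with `d > 2`, then
for `r ≥ 3` and `x ∈ [−r/2, r/2)^d`, the wrapped sum over nonzero `u` satisfies
`∑_{u≠0} |f(x+ru)| ≤ C r^{−d} ν^{−2}`, with `C` depending only on `d, c, c'`. -/
theorem wrapped_sum_bound (d : ℕ) (hd : 2 < d) (c c' : ℝ) (hc : 0 < c) (hc' : 0 < c') :
    ∃ C : ℝ, ∀ ν : ℝ, 0 < ν → ∀ f : (Fin d → ℤ) → ℝ,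
      (∀ x, |f x| ≤ c / (max 1 (eucNorm x)) ^ (d - 2) * Real.exp (-c' * ν * eucNorm x)) →
      ∀ r : ℕ, 3 ≤ r → ∀ x : Fin d → ℤ, (∀ j, -(r : ℤ) ≤ 2 * x j ∧ 2 * x j < r) →
        Summable (fun u : {u : Fin d → ℤ // u ≠ 0} => |f (x + (r : ℤ) • (u : Fin d → ℤ))|) ∧
        (∑' u : {u : Fin d → ℤ // u ≠ 0}, |f (x + (r : ℤ) • (u : Fin d → ℤ))|)
          ≤ C / ((r : ℝ) ^ d * ν ^ 2) := by
  classical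
  obtain ⟨k, hk⟩ : ∃ k, d = k + 3 := ⟨d - 3, by omega⟩
  have hd2 : d - 2 = k + 1 := by omega
  refine ⟨c * 2 ^ (d - 2) * (2 * d * 3 ^ (d - 1)) * 16 / c' ^ 2, ?_⟩
  intro ν hν f hf r hr x hx
  have hrR : (3:ℝ) ≤ (r:ℝ) := by exact_mod_cast hr
  have hr0 : (0:ℝ) < (r:ℝ) := by linarith
  set β : ℝ := c' * ν * r / 2 with hβdef
  have hβ : 0 < β := by rw [hβdef]; positivity
  set A : ℝ := c * (2 / (r:ℝ)) ^ (d - 2) with hAdef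
  have hA : 0 ≤ A := by rw [hAdef]; positivity
  set F : (Fin d → ℤ) → ℝ := fun v => |f (x + (r : ℤ) • v)| with hFdef
  have hF0 : ∀ v, 0 ≤ F v := fun v => abs_nonneg _
  have hFb : ∀ v : Fin d → ℤ, v ≠ 0 →
      F v ≤ A / (znsup v : ℝ) ^ (k + 1) * Real.exp (-β * znsup v) := by
    intro v hv
    have h := pointwise_bound d hd c c' ν hc hc' hν f hf r hr x hx v hv
    rw [hd2] at h
    refine h.trans (le_of_eq ?_)
    rw [hAdef, hβdef, hd2]
  set T : {u : Fin d → ℤ // u ≠ 0} → ℝ := fun u => |f (x + (r : ℤ) • (u : Fin d → ℤ))|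
    with hTdef
  have key : ∀ s : Finset {u : Fin d → ℤ // u ≠ 0},
      ∑ u ∈ s, T u ≤ A * (2 * d * 3 ^ (d - 1)) * (4 / β ^ 2) := by
    intro s
    have himg : ∑ v ∈ s.image Subtype.val, F v = ∑ u ∈ s, T u := by
      rw [Finset.sum_image]
      intro a _ b _ h
      exact Subtype.ext h
    have h0 : (0 : Fin d → ℤ) ∉ s.image Subtype.val := by
      intro h
      obtain ⟨u, -, hu⟩ := Finset.mem_image.mp h
      exact u.2 hu
    rw [← himg]
    exact master d k hk A β hA hβ F hF0 hFb (s.image Subtype.val) h0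
  have hT0 : (0 : {u : Fin d → ℤ // u ≠ 0} → ℝ) ≤ T := fun u => abs_nonneg _
  have hsummable : Summable T := summable_of_sum_le hT0 key
  refine ⟨hsummable, ?_⟩
  have htsum : ∑' u, T u ≤ A * (2 * d * 3 ^ (d - 1)) * (4 / β ^ 2) :=
    Summable.tsum_le_of_sum_le hsummable key
  refine htsum.trans ?_
  refine le_of_eq ?_
  rw [hAdef, hβdef, hd2]
  have hrpow : (r:ℝ) ^ d = (r:ℝ) ^ (k + 1) * (r:ℝ) ^ 2 := by
    rw [← pow_add]
    congr 1
  have hd1 : d - 1 = k + 2 := by omega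
  rw [hrpow, hd1]
  have h2r : (2 / (r:ℝ)) ^ (k + 1) = 2 ^ (k + 1) / (r:ℝ) ^ (k + 1) := div_pow 2 _ _
  rw [h2r]
  have hrk : ((r:ℝ)) ^ (k + 1) ≠ 0 := by positivity
  field_simp
  ring
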